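/- Define vectors in ℂ² by y_i = ((q^{D-i}-1)(q^{N-i+1}-1)/((q^D-1)(q^{N-2i+1}-1)), q^{D+1-i}(q-1)/((q^D-1)(q^{N-2i+1}-1))) and y_{-i} = (q^{D-i}(q^i-1)(q^{N-D-i+1}-1)/((q^D-1)(q^{N-2i+1}-1)), -q^{D-i+1}(q-1)/((q^D-1)(q^{N-2i+1}-1))) for 1 ≤ i ≤ D-1. Then X(i)·y_i = τ q^i · y_i and X(i)·y_{-i} = τ^{-1} q^{-i} · y_{-i}, where X(i) is the 2×2 matrix τ/(q^D-1)·[[q^{N+1}-q^i+q^D-q^{N+1-i}, (q^i-1)(q^{D-i}-1)(q^{N-i+1}-1)(q^{i-1}-q^{N-D})/(q-1)], [q^{D+1}(1-q), q^{N+D+1-i}+q^{D+i}-q^{N+1}-q^D]] and τ = -q^{(-N-1)/2}. Moreover y_i + y_{-i} = (1, 0). -/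

import Mathlib

open Matrix

set_option maxHeartbeats 1600000 in
/-- The explicit vectors `y_i`, `y_{-i}` are eigenvectors of `X(i)` for the eigenvalues
`τq^i` and `τ⁻¹q^{-i}`, and they sum to `(1,0)`. -/
theorem X_matrix_eigenvectors (q : ℝ) (hq : 1 < q) (N D : ℕ)
    (hD : 3 ≤ D) (hND : 2 * D ≤ N)
    (i : ℕ) (hi1 : 1 ≤ i) (hi2 : i ≤ D - 1)
    (τ : ℝ) (hτ : τ = -q ^ ((-(N : ℝ) - 1) / 2))
    (X : Matrix (Fin 2) (Fin 2) ℝ)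
    (hX : X = (τ / (q ^ D - 1)) •
      !![q ^ (N + 1) - q ^ i + q ^ D - q ^ (N + 1 - i),
         (q ^ i - 1) * (q ^ (D - i) - 1) * (q ^ (N - i + 1) - 1)
           * (q ^ (i - 1) - q ^ (N - D)) / (q - 1);
         q ^ (D + 1) * (1 - q),
         q ^ (N + D + 1 - i) + q ^ (D + i) - q ^ (N + 1) - q ^ D])
    (yp ym : Fin 2 → ℝ)
    (hyp : yp = ![(q ^ (D - i) - 1) * (q ^ (N - i + 1) - 1)
        / ((q ^ D - 1) * (q ^ (N - 2 * i + 1) - 1)),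
      q ^ (D + 1 - i) * (q - 1) / ((q ^ D - 1) * (q ^ (N - 2 * i + 1) - 1))])
    (hym : ym = ![q ^ (D - i) * (q ^ i - 1) * (q ^ (N - D - i + 1) - 1)
        / ((q ^ D - 1) * (q ^ (N - 2 * i + 1) - 1)),
      -(q ^ (D - i + 1) * (q - 1) / ((q ^ D - 1) * (q ^ (N - 2 * i + 1) - 1)))]) :
    X.mulVec yp = (τ * q ^ i) • yp ∧
    X.mulVec ym = (τ⁻¹ * q ^ (-(i : ℤ))) • ym ∧
    yp + ym = ![1, 0] := by
  have h0 : (0:ℝ) < q := by linarith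
  have hq0 : q ≠ 0 := ne_of_gt h0
  have hq1 : q - 1 ≠ 0 := by nlinarith
  have hiD : i + 1 ≤ D := by omega
  have hqD : q ^ D - 1 ≠ 0 := by
    have := one_lt_pow₀ hq (by omega : D ≠ 0); linarith
  have hqN2 : q ^ (N + 1 - 2 * i) - 1 ≠ 0 := by
    have := one_lt_pow₀ hq (by omega : N + 1 - 2 * i ≠ 0); linarith
  -- rewrite all nat subtractions
  have e1 : q ^ (N + 1 - i) = q ^ (N + 1) / q ^ i := by rw [pow_sub₀ q hq0 (by omega : i ≤ N + 1)]; ring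
  have e2 : q ^ (N - i + 1) = q ^ (N + 1) / q ^ i := by
    rw [show N - i + 1 = N + 1 - i from by omega, pow_sub₀ q hq0 (by omega : i ≤ N + 1)]; ring
  have e3 : q ^ (D - i) = q ^ D / q ^ i := by rw [pow_sub₀ q hq0 (by omega : i ≤ D)]; ring
  have e4 : q ^ (i - 1) = q ^ i / q := by
    rw [pow_sub₀ q hq0 (by omega : 1 ≤ i), pow_one]; ring
  have e5 : q ^ (N - D) = q ^ N / q ^ D := by rw [pow_sub₀ q hq0 (by omega : D ≤ N)]; ring
  have e6 : q ^ (N + D + 1 - i) = q ^ (N + D + 1) / q ^ i := by rw [pow_sub₀ q hq0 (by omega : i ≤ N + D + 1)]; ring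
  have e7 : q ^ (N - 2 * i + 1) = q ^ (N + 1 - 2 * i) := by
    rw [show N - 2 * i + 1 = N + 1 - 2 * i from by omega]
  have e8 : q ^ (N + 1 - 2 * i) = q ^ (N + 1) / (q ^ i * q ^ i) := by
    rw [pow_sub₀ q hq0 (by omega : 2 * i ≤ N + 1), ← pow_add, two_mul]; ring
  have e9 : q ^ (D + 1 - i) = q ^ (D + 1) / q ^ i := by rw [pow_sub₀ q hq0 (by omega : i ≤ D + 1)]; ring
  have e10 : q ^ (N - D - i + 1) = q ^ (N + 1) / (q ^ D * q ^ i) := by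
    rw [show N - D - i + 1 = N + 1 - (D + i) from by omega,
      pow_sub₀ q hq0 (by omega : D + i ≤ N + 1), pow_add]; ring
  have e11 : q ^ (D - i + 1) = q ^ (D + 1) / q ^ i := by
    rw [show D - i + 1 = D + 1 - i from by omega, pow_sub₀ q hq0 (by omega : i ≤ D + 1)]; ring
  have hqi : q ^ i ≠ 0 := pow_ne_zero _ hq0
  have hA : q ^ (N + 1) - q ^ i * q ^ i ≠ 0 := by
    rw [← pow_add]
    exact sub_ne_zero.mpr (ne_of_gt (pow_lt_pow_right₀ hq (by omega)))
  have hB : q ^ D - q ^ i ≠ 0 :=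
    sub_ne_zero.mpr (ne_of_gt (pow_lt_pow_right₀ hq (by omega)))
  have hC : q ^ (N + 1) - q ^ D * q ^ i ≠ 0 := by
    rw [← pow_add]
    exact sub_ne_zero.mpr (ne_of_gt (pow_lt_pow_right₀ hq (by omega)))
  -- τ facts
  have hτ0 : τ ≠ 0 := by
    rw [hτ]
    have := Real.rpow_pos_of_pos h0 ((-(N : ℝ) - 1) / 2)
    intro h; rw [neg_eq_zero] at h; linarith
  have hτsq : τ * τ = (q ^ (N + 1))⁻¹ := by
    rw [hτ, neg_mul_neg, ← Real.rpow_add h0]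
    rw [show (-(N : ℝ) - 1) / 2 + (-(N : ℝ) - 1) / 2 = -((N : ℝ) + 1) by ring]
    rw [Real.rpow_neg h0.le, ← Real.rpow_natCast q (N + 1)]
    push_cast
    ring_nf
  have hpow : (q:ℝ) ^ (N+1) ≠ 0 := pow_ne_zero _ hq0
  have hτinv : τ⁻¹ = τ * q ^ (N + 1) := by
    refine inv_eq_of_mul_eq_one_right ?_
    calc τ * (τ * q ^ (N + 1)) = (τ * τ) * q ^ (N + 1) := by ring
      _ = (q ^ (N + 1))⁻¹ * q ^ (N + 1) := by rw [hτsq]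
      _ = 1 := inv_mul_cancel₀ hpow
  have hzi : (q : ℝ) ^ (-(i : ℤ)) = (q ^ i)⁻¹ := by
    rw [_root_.zpow_neg, zpow_natCast]
  subst hX hyp hym
  refine ⟨?_, ?_, ?_⟩
  · funext x
    fin_cases x <;>
    · simp only [Matrix.mulVec, Matrix.smul_apply, dotProduct, Fin.sum_univ_two, Fin.zero_eta, Fin.mk_one,
        Matrix.cons_val', Matrix.cons_val_zero, Matrix.cons_val_one, Matrix.head_cons,
        Matrix.empty_val', Matrix.cons_val_fin_one, Matrix.head_fin_const, Pi.smul_apply,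
        smul_eq_mul, Matrix.smul_of, Matrix.of_apply, Fin.isValue, Matrix.smul_cons,
        Matrix.smul_empty]
      simp only [e1, e2, e3, e4, e5, e6, e7, e8, e9, e10, e11]
      field_simp [hA, hB, hC]
      ring
  · funext x
    fin_cases x <;>
    · simp only [Matrix.mulVec, Matrix.smul_apply, dotProduct, Fin.sum_univ_two, Fin.zero_eta, Fin.mk_one,
        Matrix.cons_val', Matrix.cons_val_zero, Matrix.cons_val_one, Matrix.head_cons,
        Matrix.empty_val', Matrix.cons_val_fin_one, Matrix.head_fin_const, Pi.smul_apply,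
        smul_eq_mul, Matrix.smul_of, Matrix.of_apply, Fin.isValue, Matrix.smul_cons,
        Matrix.smul_empty, hzi, hτinv]
      simp only [e1, e2, e3, e4, e5, e6, e7, e8, e9, e10, e11]
      field_simp [hA, hB, hC]
      ring
  · funext x
    fin_cases x <;>
    · simp only [Pi.add_apply, Matrix.cons_val', Matrix.cons_val_zero, Matrix.cons_val_one,
        Matrix.head_cons, Matrix.empty_val', Matrix.cons_val_fin_one, Fin.isValue, Fin.zero_eta, Fin.mk_one]
      simp only [e1, e2, e3, e4, e5, e6, e7, e8, e9, e10, e11]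
      have hA' : q * q ^ N - q ^ (i * 2) ≠ 0 := by convert hA using 1; ring
      field_simp [hA, hB, hC, hA']
      try ring
      all_goals
        rw [← sub_eq_zero]
        have hc : q * q ^ D * q ^ N * (q * q ^ N - q ^ (i * 2))⁻¹ - q * q ^ N * (q * q ^ N - q ^ (i * 2))⁻¹ -
            q ^ D * q ^ (i * 2) * (q * q ^ N - q ^ (i * 2))⁻¹ + q ^ (i * 2) * (q * q ^ N - q ^ (i * 2))⁻¹ =
            (q ^ D - 1) * ((q * q ^ N - q ^ (i * 2)) * (q * q ^ N - q ^ (i * 2))⁻¹) := by ring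
        rw [hc, mul_inv_cancel₀ hA']; ring
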